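/- Let u and v be coprime positive integers, set r = √(u/v), and let y > 0 be real. For (m,w) ∈ ℤ×ℤ set p_L = m/r + w·r and p_R = m/r − w·r. Then the function T ↦ Σ_{(m,w)∈ℤ×ℤ} exp(−(π/2)(T·p_L² + y·p_R²)) tends to Σ_{n∈ℤ} exp(−2π·u·v·y·n²) as the real variable T tends to +∞. -/

import Mathlib

lemma my_summable_gauss {a : ℝ} (ha : 0 < a) :
    Summable fun n : ℤ => Real.exp (-a * (n : ℝ) ^ 2) := by
  have hgeo : Summable fun n : ℕ => Real.exp (-a) ^ n :=
    summable_geometric_of_lt_one (Real.exp_pos (-a)).le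
      (by rw [Real.exp_lt_one_iff]; linarith)
  have hnat : Summable fun n : ℕ => Real.exp (-a * (n : ℝ) ^ 2) := by
    refine Summable.of_nonneg_of_le (fun n => (Real.exp_pos _).le) (fun n => ?_) hgeo
    rw [← Real.exp_nat_mul]
    apply Real.exp_le_exp.mpr
    have h1 : (n : ℝ) ≤ (n : ℝ) ^ 2 := by
      exact_mod_cast Nat.le_self_pow two_ne_zero n
    nlinarith
  apply Summable.of_nat_of_neg <;> simpa using hnat

set_option maxHeartbeats 1000000 in
/-- At rational `r² = u/v` (with `u, v` coprime), the solitonic sum over the Narain lattice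
projects in the `T → ∞` limit onto the `p_L = 0` sublattice, giving `Σ_n e^{-2π u v y n²}`. -/
theorem stmt_13 (u v : ℕ) (hu : 0 < u) (hv : 0 < v) (huv : Nat.Coprime u v)
    (r : ℝ) (hr : r = Real.sqrt ((u : ℝ) / (v : ℝ))) (y : ℝ) (hy : 0 < y) :
    Filter.Tendsto
      (fun T : ℝ => ∑' p : ℤ × ℤ,
        Real.exp (-(Real.pi / 2) *
          (T * ((p.1 : ℝ) / r + (p.2 : ℝ) * r) ^ 2 + y * ((p.1 : ℝ) / r - (p.2 : ℝ) * r) ^ 2)))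
      Filter.atTop
      (nhds (∑' n : ℤ, Real.exp (-(2 * Real.pi * (u : ℝ) * (v : ℝ) * y) * (n : ℝ) ^ 2))) := by
  have hu' : (0:ℝ) < u := Nat.cast_pos.mpr hu
  have hv' : (0:ℝ) < v := Nat.cast_pos.mpr hv
  have hruv : (0:ℝ) < (u:ℝ)/v := div_pos hu' hv'
  have hr0 : 0 < r := by rw [hr]; exact Real.sqrt_pos.mpr hruv
  have hr2 : r ^ 2 = (u:ℝ)/v := by rw [hr, Real.sq_sqrt hruv.le]
  have hrne : r ≠ 0 := hr0.ne'
  have hpi := Real.pi_pos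
  set pL : ℤ × ℤ → ℝ := fun p => (p.1 : ℝ) / r + (p.2 : ℝ) * r with hpLdef
  set pR : ℤ × ℤ → ℝ := fun p => (p.1 : ℝ) / r - (p.2 : ℝ) * r with hpRdef
  -- key identity:  pL p * (v * r) = p.1 * v + p.2 * u  (as reals)
  have key : ∀ p : ℤ × ℤ, pL p * ((v:ℝ) * r) = ((p.1 * v + p.2 * u : ℤ) : ℝ) := by
    intro p
    have e1 : (p.1:ℝ)/r * ((v:ℝ)*r) = (p.1:ℝ)*v := by
      field_simp; try ring
    have e2 : (p.2:ℝ)*r*((v:ℝ)*r) = (p.2:ℝ)*u := by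
      have h : (p.2:ℝ)*r*((v:ℝ)*r) = (p.2:ℝ)*(v:ℝ)*r^2 := by ring
      rw [h, hr2]; field_simp; try ring
    simp only [hpLdef]
    push_cast
    rw [add_mul, e1, e2]
  have hvr : (v:ℝ) * r ≠ 0 := mul_ne_zero hv'.ne' hrne
  -- pL vanishing criterion
  have hzero : ∀ p : ℤ × ℤ, pL p = 0 ↔ p.1 * v + p.2 * u = 0 := by
    intro p
    rw [← Int.cast_eq_zero (α := ℝ), ← key p, mul_eq_zero]
    simp [hvr]
  -- the limit function
  classical
  set g : ℤ × ℤ → ℝ := fun p =>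
    if p.1 * (v:ℤ) + p.2 * (u:ℤ) = 0 then Real.exp (-(Real.pi / 2) * (y * pR p ^ 2)) else 0
    with hgdef
  -- the dominating bound
  set a : ℝ := Real.pi * y * v / u with hadef
  set b : ℝ := Real.pi * y * u / v with hbdef
  have ha : 0 < a := by positivity
  have hb : 0 < b := by positivity
  set bound : ℤ × ℤ → ℝ := fun p =>
    Real.exp (-a * (p.1:ℝ) ^ 2) * Real.exp (-b * (p.2:ℝ) ^ 2) with hbdd
  have hbound_sum : Summable bound :=
    (my_summable_gauss ha).mul_of_nonneg (my_summable_gauss hb)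
      (fun n => (Real.exp_pos _).le) (fun n => (Real.exp_pos _).le)
  -- the algebraic identity for the bound
  have hquad : ∀ p : ℤ × ℤ,
      Real.pi / 2 * (y * pL p ^ 2 + y * pR p ^ 2) = a * (p.1:ℝ) ^ 2 + b * (p.2:ℝ) ^ 2 := by
    intro p
    simp only [hpLdef, hpRdef, hadef, hbdef]
    have h1 : ((p.1:ℝ)/r) ^ 2 = (p.1:ℝ)^2 * v / u := by
      rw [div_pow, hr2]; field_simp; try ring
    have h2 : ((p.2:ℝ) * r) ^ 2 = (p.2:ℝ)^2 * u / v := by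
      rw [mul_pow, hr2]; field_simp; try ring
    have expand : ((p.1:ℝ)/r + (p.2:ℝ)*r)^2 + ((p.1:ℝ)/r - (p.2:ℝ)*r)^2
        = 2 * ((p.1:ℝ)^2 * v / u) + 2 * ((p.2:ℝ)^2 * u / v) := by rw [← h1, ← h2]; ring
    linear_combination (Real.pi / 2 * y) * expand
  -- apply dominated convergence
  have main : Filter.Tendsto
      (fun T : ℝ => ∑' p : ℤ × ℤ,
        Real.exp (-(Real.pi / 2) * (T * pL p ^ 2 + y * pR p ^ 2)))
      Filter.atTop (nhds (∑' p, g p)) := by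
    apply tendsto_tsum_of_dominated_convergence hbound_sum
    · intro p
      by_cases h : p.1 * (v:ℤ) + p.2 * (u:ℤ) = 0
      · have hL : pL p = 0 := (hzero p).mpr h
        simp only [hL, hgdef, if_pos h]
        simpa [hL] using tendsto_const_nhds
          (x := Real.exp (-(Real.pi / 2) * (y * pR p ^ 2))) (f := Filter.atTop (α := ℝ))
      · have hL : pL p ≠ 0 := fun hc => h ((hzero p).mp hc)
        have hL2 : 0 < pL p ^ 2 := by positivity
        simp only [hgdef, if_neg h]
        have heq : ∀ T : ℝ, Real.exp (-(Real.pi / 2) * (T * pL p ^ 2 + y * pR p ^ 2))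
            = Real.exp ((-(Real.pi / 2) * pL p ^ 2) * T) * Real.exp (-(Real.pi / 2) * (y * pR p ^ 2)) := by
          intro T; rw [← Real.exp_add]; ring_nf
        have h0 : Filter.Tendsto (fun T : ℝ => Real.exp ((-(Real.pi / 2) * pL p ^ 2) * T))
            Filter.atTop (nhds 0) :=
          Real.tendsto_exp_atBot.comp
            ((Filter.tendsto_const_mul_atBot_of_neg
              (by rw [neg_mul]; exact neg_lt_zero.mpr (mul_pos (half_pos hpi) hL2) : -(Real.pi / 2) * pL p ^ 2 < 0)).mpr
              Filter.tendsto_id)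
        have hlim := h0.mul_const (Real.exp (-(Real.pi / 2) * (y * pR p ^ 2)))
        rw [zero_mul] at hlim
        exact Filter.Tendsto.congr (fun T => (heq T).symm) hlim
    · filter_upwards [Filter.eventually_ge_atTop y] with T hT
      intro p
      show |Real.exp (-(Real.pi / 2) * (T * pL p ^ 2 + y * pR p ^ 2))|
          ≤ Real.exp (-a * (p.1:ℝ) ^ 2) * Real.exp (-b * (p.2:ℝ) ^ 2)
      rw [abs_of_pos (Real.exp_pos _), ← Real.exp_add]
      apply Real.exp_le_exp.mpr
      have h1 : y * pL p ^ 2 ≤ T * pL p ^ 2 :=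
        mul_le_mul_of_nonneg_right hT (sq_nonneg _)
      have h2 := hquad p
      have h3 : Real.pi / 2 * (y * pL p ^ 2) ≤ Real.pi / 2 * (T * pL p ^ 2) :=
        mul_le_mul_of_nonneg_left h1 (by positivity)
      linarith
  -- identify the limit tsum with the 1-dimensional theta sum
  have htsum : (∑' p, g p) = ∑' n : ℤ, Real.exp (-(2 * Real.pi * (u:ℝ) * (v:ℝ) * y) * (n:ℝ) ^ 2) := by
    have hinj : Function.Injective (fun n : ℤ => ((n * u, -(n * v)) : ℤ × ℤ)) := by
      intro n n' h
      have := congrArg Prod.fst h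
      simp only at this
      exact mul_right_cancel₀ (by exact_mod_cast hu.ne' : (u:ℤ) ≠ 0) this
    have hsupp : Function.support g ⊆ Set.range (fun n : ℤ => ((n * u, -(n * v)) : ℤ × ℤ)) := by
      intro p hp
      have h : p.1 * (v:ℤ) + p.2 * (u:ℤ) = 0 := by
        by_contra hc; exact hp (by simp [hgdef, if_neg hc])
      have hdvd : (u:ℤ) ∣ p.1 * v := ⟨-p.2, by linarith⟩
      have hcop : IsCoprime (u:ℤ) (v:ℤ) := Int.isCoprime_iff_gcd_eq_one.mpr (by
        simpa [Int.gcd_natCast_natCast] using huv)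
      obtain ⟨n, hn⟩ := hcop.dvd_of_dvd_mul_right hdvd
      refine ⟨n, ?_⟩
      have hu0 : (u:ℤ) ≠ 0 := by exact_mod_cast hu.ne'
      have h2 : (u:ℤ) * (n * v + p.2) = 0 := by rw [hn] at h; linear_combination h
      have h3 : n * (v:ℤ) + p.2 = 0 := (mul_eq_zero.mp h2).resolve_left hu0
      have hw : p.2 = -(n * v) := by linarith
      simp only [Prod.ext_iff]
      exact ⟨by rw [hn, mul_comm], hw.symm⟩
    rw [← hinj.tsum_eq hsupp]
    congr 1
    funext n
    have hcond : (n * (u:ℤ)) * v + (-(n * v)) * u = 0 := by ring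
    simp only [hgdef, hcond, if_pos]
    congr 1
    have hpRn : pR (n * u, -(n * v)) = (n:ℝ) * ((u:ℝ)/r + (v:ℝ)*r) := by
      simp only [hpRdef]; push_cast; field_simp; ring
    rw [hpRn]
    have hsq : ((u:ℝ)/r + (v:ℝ)*r) ^ 2 = 4 * u * v := by
      have h1 : ((u:ℝ)/r) ^ 2 = (u:ℝ) * v := by rw [div_pow, hr2]; field_simp; try ring
      have h2 : ((v:ℝ)*r) ^ 2 = (u:ℝ) * v := by rw [mul_pow, hr2]; field_simp; try ring
      have h3 : ((u:ℝ)/r) * ((v:ℝ)*r) = (u:ℝ) * v := by field_simp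
      linear_combination h1 + 2 * h3 + h2
    linear_combination (-(Real.pi / 2) * y * (n:ℝ) ^ 2) * hsq
  rw [← htsum]
  exact main
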